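/- Let 1 < p < ∞ and r, s nonzero reals. The following are equivalent for B(r,s) on l_p: (1) B(r,s)^n / n → 0 in the strong operator topology; (2) B(r,s) is mean ergodic; (3) B(r,s) is power bounded; (4) |r| + |s| ≤ 1. -/

import Mathlib

open scoped ENNReal
open Filter

namespace Stmt10Aux

noncomputable def sing (p : ℝ≥0∞) [Fact (1 ≤ p)] (i : ℕ) (a : ℂ) : lp (fun _ : ℕ => ℂ) p :=
  lp.single p i a

variable {p : ℝ≥0∞} [Fact (1 ≤ p)]
variable {r s : ℝ} {T : lp (fun _ : ℕ => ℂ) p →L[ℂ] lp (fun _ : ℕ => ℂ) p}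

def IsB (p : ℝ≥0∞) [Fact (1 ≤ p)] (r s : ℝ)
    (T : lp (fun _ : ℕ => ℂ) p →L[ℂ] lp (fun _ : ℕ => ℂ) p) : Prop :=
  ∀ x : lp (fun _ : ℕ => ℂ) p, (T x : ∀ _ : ℕ, ℂ) 0 = (r : ℂ) * (x : ∀ _ : ℕ, ℂ) 0 ∧
    ∀ n : ℕ, (T x : ∀ _ : ℕ, ℂ) (n + 1)
      = (s : ℂ) * (x : ∀ _ : ℕ, ℂ) n + (r : ℂ) * (x : ∀ _ : ℕ, ℂ) (n + 1)

lemma sing_sub (i : ℕ) (x y : ℂ) : sing p i (x - y) = sing p i x - sing p i y := by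
  apply lp.ext; funext n
  simp only [sing, lp.coeFn_sub, Pi.sub_apply, lp.single_apply]
  by_cases h : n = i <;> simp [h]

lemma sing_zero (i : ℕ) : sing p i (0 : ℂ) = 0 := by
  apply lp.ext; funext n
  simp only [sing, lp.single_apply, lp.coeFn_zero, Pi.zero_apply]
  by_cases h : n = i <;> simp [h]

lemma sing_eq_sing (i : ℕ) {x y : ℂ} (h : x = y) : sing p i x = sing p i y := by rw [h]

lemma T_sing (hT : IsB p r s T) (k : ℕ) (a : ℂ) :
    T (sing p k a) = sing p k ((r : ℂ) * a) + sing p (k + 1) ((s : ℂ) * a) := by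
  apply lp.ext; funext n
  cases n with
  | zero =>
    have h1 := (hT (sing p k a)).1
    simp only [sing, lp.coeFn_add, Pi.add_apply] at h1 ⊢
    rw [h1]
    simp only [lp.single_apply]
    by_cases h : k = 0 <;> simp [h]
  | succ n =>
    have h2 := (hT (sing p k a)).2 n
    simp only [sing, lp.coeFn_add, Pi.add_apply] at h2 ⊢
    rw [h2]
    simp only [lp.single_apply]
    by_cases h : n = k
    · simp [h]
    · by_cases h' : n + 1 = k <;> simp [h, h']

lemma norm_T_apply_le (hq : 0 < p.toReal) (hT : IsB p r s T) (x : lp (fun _ : ℕ => ℂ) p) :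
    ‖T x‖ ≤ (|r| + |s|) * ‖x‖ := by
  set y : lp (fun _ : ℕ => ℂ) p := T x - (r : ℂ) • x with hy
  have hy0 : (y : ∀ _ : ℕ, ℂ) 0 = 0 := by
    simp only [hy, lp.coeFn_sub, Pi.sub_apply, lp.coeFn_smul, Pi.smul_apply, smul_eq_mul,
      (hT x).1, sub_self]
  have hyn : ∀ n, (y : ∀ _ : ℕ, ℂ) (n + 1) = (s : ℂ) * (x : ∀ _ : ℕ, ℂ) n := by
    intro n
    simp only [hy, lp.coeFn_sub, Pi.sub_apply, lp.coeFn_smul, Pi.smul_apply, smul_eq_mul,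
      (hT x).2 n]
    ring
  have hnormy : ‖y‖ = |s| * ‖x‖ := by
    have h1 : ‖y‖ ^ p.toReal = ∑' n, ‖(y : ∀ _ : ℕ, ℂ) n‖ ^ p.toReal :=
      lp.norm_rpow_eq_tsum hq y
    have hsum : Summable (fun n => ‖(y : ∀ _ : ℕ, ℂ) n‖ ^ p.toReal) :=
      (lp.memℓp y).summable hq
    rw [Summable.tsum_eq_zero_add hsum, hy0, norm_zero, Real.zero_rpow hq.ne', zero_add] at h1
    have h2 : ∀ n : ℕ, ‖(y : ∀ _ : ℕ, ℂ) (n + 1)‖ ^ p.toReal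
        = |s| ^ p.toReal * ‖(x : ∀ _ : ℕ, ℂ) n‖ ^ p.toReal := by
      intro n
      rw [hyn n, norm_mul, Complex.norm_real, Real.norm_eq_abs,
        Real.mul_rpow (abs_nonneg _) (norm_nonneg _)]
    rw [tsum_congr h2, tsum_mul_left, ← lp.norm_rpow_eq_tsum hq x] at h1
    have h3 : ‖y‖ ^ p.toReal = (|s| * ‖x‖) ^ p.toReal := by
      rw [h1, Real.mul_rpow (abs_nonneg _) (norm_nonneg _)]
    exact Real.rpow_left_injOn hq.ne' (norm_nonneg _)
      (mul_nonneg (abs_nonneg _) (norm_nonneg _)) h3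
  have hTx : T x = (r : ℂ) • x + y := by rw [hy]; abel
  calc ‖T x‖ = ‖(r : ℂ) • x + y‖ := by rw [← hTx]
    _ ≤ ‖(r : ℂ) • x‖ + ‖y‖ := norm_add_le _ _
    _ = |r| * ‖x‖ + |s| * ‖x‖ := by
        rw [norm_smul, hnormy, Complex.norm_real, Real.norm_eq_abs]
    _ = (|r| + |s|) * ‖x‖ := by ring

lemma norm_T_le (hq : 0 < p.toReal) (hT : IsB p r s T) : ‖T‖ ≤ |r| + |s| :=
  T.opNorm_le_bound (by positivity) (norm_T_apply_le hq hT)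

lemma T_pow_sing_apply (hT : IsB p r s T) (n k : ℕ) :
    ((T ^ n) (sing p 0 1) : ∀ _ : ℕ, ℂ) k
      = (n.choose k : ℂ) * (s : ℂ) ^ k * (r : ℂ) ^ (n - k) := by
  induction n generalizing k with
  | zero =>
    rw [pow_zero, ContinuousLinearMap.one_apply]
    cases k with
    | zero => simp [sing, lp.single_apply]
    | succ k => simp [sing, lp.single_apply]
  | succ n ih =>
    rw [pow_succ', ContinuousLinearMap.mul_apply]
    cases k with
    | zero =>
      rw [(hT _).1, ih 0]
      simp only [Nat.choose_zero_right, Nat.cast_one, one_mul, pow_zero, Nat.sub_zero]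
      ring
    | succ k =>
      rw [(hT _).2 k, ih k, ih (k + 1)]
      rcases lt_trichotomy n k with h | h | h
      · have h1 : n.choose k = 0 := Nat.choose_eq_zero_of_lt h
        have h2 : n.choose (k + 1) = 0 := Nat.choose_eq_zero_of_lt (by omega)
        have h3 : (n + 1).choose (k + 1) = 0 := Nat.choose_eq_zero_of_lt (by omega)
        simp [h1, h2, h3]
      · subst h
        have h2 : n.choose (n + 1) = 0 := Nat.choose_eq_zero_of_lt (by omega)
        simp [h2, Nat.choose_self, pow_succ]
        ring
      · have e1 : n - k = (n - (k + 1)) + 1 := by omega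
        rw [Nat.succ_sub_succ, Nat.choose_succ_succ, e1]
        push_cast
        ring

lemma not_tendsto_of_one_lt (hq : 0 < p.toReal) (hT : IsB p r s T) (hrs : 1 < |r| + |s|) :
    ¬ ∀ x, Tendsto (fun n : ℕ => ((n : ℂ))⁻¹ • (T ^ n) x) atTop (nhds 0) := by
  intro h
  have hp0 : p ≠ 0 := by
    intro hh; rw [hh] at hq; simp at hq
  set e : lp (fun _ : ℕ => ℂ) p := sing p 0 (1 : ℂ) with he
  set c := |r| + |s| with hc
  have key : ∀ n : ℕ, c ^ n ≤ (n + 1 : ℝ) * ‖(T ^ n) e‖ := by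
    intro n
    have hsum : ∑ k ∈ Finset.range (n + 1), |s| ^ k * |r| ^ (n - k) * (n.choose k : ℝ)
        = c ^ n := by
      rw [hc, add_comm |r| |s|, add_pow]
    have hterm : ∀ k ∈ Finset.range (n + 1),
        |s| ^ k * |r| ^ (n - k) * (n.choose k : ℝ) ≤ ‖(T ^ n) e‖ := by
      intro k _
      have h1 : ‖((T ^ n) e : ∀ _ : ℕ, ℂ) k‖ = |s| ^ k * |r| ^ (n - k) * (n.choose k : ℝ) := by
        rw [he, T_pow_sing_apply hT n k]
        simp only [norm_mul, norm_pow, Complex.norm_real, Complex.norm_natCast,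
          Real.norm_eq_abs]
        ring
      rw [← h1]
      exact lp.norm_apply_le_norm hp0 _ k
    calc c ^ n = ∑ k ∈ Finset.range (n + 1), |s| ^ k * |r| ^ (n - k) * (n.choose k : ℝ) :=
          hsum.symm
      _ ≤ ∑ _k ∈ Finset.range (n + 1), ‖(T ^ n) e‖ := Finset.sum_le_sum hterm
      _ = (n + 1 : ℝ) * ‖(T ^ n) e‖ := by
          rw [Finset.sum_const, Finset.card_range]; push_cast; ring
  have hnorm : Tendsto (fun n : ℕ => ‖((n : ℂ))⁻¹ • (T ^ n) e‖) atTop (nhds 0) := by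
    simpa using (h e).norm
  have hpoly : Tendsto (fun n : ℕ => ((n : ℝ) ^ 2 + (n : ℝ) ^ 1) / c ^ n) atTop (nhds 0) := by
    have h2 := tendsto_pow_const_div_const_pow_of_one_lt 2 hrs
    have h1 := tendsto_pow_const_div_const_pow_of_one_lt 1 hrs
    have := h2.add h1
    simpa [add_div] using this
  have hprod : Tendsto (fun n : ℕ =>
      (((n : ℝ) ^ 2 + (n : ℝ) ^ 1) / c ^ n) * ‖((n : ℂ))⁻¹ • (T ^ n) e‖) atTop (nhds 0) := by
    simpa using hpoly.mul hnorm
  have hev : ∀ᶠ n : ℕ in atTop, (1 : ℝ) ≤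
      (((n : ℝ) ^ 2 + (n : ℝ) ^ 1) / c ^ n) * ‖((n : ℂ))⁻¹ • (T ^ n) e‖ := by
    filter_upwards [eventually_ge_atTop 1] with n hn
    have hn0 : (0 : ℝ) < n := by exact_mod_cast hn
    have hcpos : (0 : ℝ) < c ^ n := by positivity
    have hns : ‖((n : ℂ))⁻¹ • (T ^ n) e‖ = ((n : ℝ))⁻¹ * ‖(T ^ n) e‖ := by
      rw [norm_smul, norm_inv, Complex.norm_natCast]
    rw [hns]
    have hk := key n
    rw [div_mul_eq_mul_div, le_div_iff₀ hcpos, one_mul]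
    calc c ^ n ≤ (n + 1 : ℝ) * ‖(T ^ n) e‖ := hk
      _ ≤ ((n : ℝ) ^ 2 + (n : ℝ) ^ 1) * (((n : ℝ))⁻¹ * ‖(T ^ n) e‖) := by
          refine le_of_eq ?_
          field_simp
  have : (1 : ℝ) ≤ 0 := ge_of_tendsto hprod hev
  linarith

set_option maxHeartbeats 1000000 in
lemma exists_approx (hq : 1 < p.toReal) (hT : IsB p r s T)
    (hr1 : |r| < 1) (hsr : |s| ≤ 1 - r) (k : ℕ) (a : ℂ) :
    ∀ ε > 0, ∃ v : lp (fun _ : ℕ => ℂ) p, ‖sing p k a - (v - T v)‖ < ε := by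
  intro ε hε
  have hq0 : 0 < p.toReal := by linarith
  have h1r : (0 : ℝ) < 1 - r := by
    have := abs_lt.mp hr1; linarith
  have h1rC : ((1 : ℂ) - (r : ℂ)) ≠ 0 := by
    have h : ((1 : ℂ) - (r : ℂ)) = ((1 - r : ℝ) : ℂ) := by push_cast; ring
    rw [h]
    exact Complex.ofReal_ne_zero.2 (by linarith)
  have hnorm1r : ‖(1 : ℂ) - (r : ℂ)‖ = 1 - r := by
    have h : ((1 : ℂ) - (r : ℂ)) = ((1 - r : ℝ) : ℂ) := by push_cast; ring
    rw [h, Complex.norm_real, Real.norm_eq_abs, abs_of_pos h1r]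
  set q : ℂ := (s : ℂ) / ((1 : ℂ) - (r : ℂ)) with hqdef
  have hq1 : ‖q‖ ≤ 1 := by
    rw [hqdef, norm_div, hnorm1r, Complex.norm_real, Real.norm_eq_abs, div_le_one h1r]
    exact hsr
  set K : ℝ := ‖a‖ * |s| / (1 - r) with hKdef
  have hK0 : 0 ≤ K := by positivity
  have htend : Tendsto (fun N : ℕ => K ^ p.toReal * (N : ℝ) ^ (1 - p.toReal)) atTop (nhds 0) := by
    have h1 : Tendsto (fun x : ℝ => x ^ (1 - p.toReal)) atTop (nhds 0) := by
      simpa [neg_sub] using tendsto_rpow_neg_atTop (by linarith : 0 < p.toReal - 1)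
    have h2 := (h1.comp (tendsto_natCast_atTop_atTop (R := ℝ))).const_mul (K ^ p.toReal)
    simpa [Function.comp] using h2
  have hev : ∀ᶠ N : ℕ in atTop,
      K ^ p.toReal * (N : ℝ) ^ (1 - p.toReal) < ε ^ p.toReal :=
    htend.eventually_lt_const (Real.rpow_pos_of_pos hε _)
  obtain ⟨N, hN1, hNlt⟩ := ((eventually_ge_atTop 1).and hev).exists
  have hN0 : (0 : ℝ) < N := by exact_mod_cast hN1
  have hNC : (N : ℂ) ≠ 0 := Nat.cast_ne_zero.2 (by omega)
  set c : ℕ → ℂ := fun j => (a / ((1 : ℂ) - (r : ℂ))) * q ^ j * (1 - (j : ℂ) / (N : ℂ))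
    with hcdef
  set v : lp (fun _ : ℕ => ℂ) p := ∑ j ∈ Finset.range (N + 1), sing p (k + j) (c j) with hvdef
  set D : ℂ := a * (s : ℂ) / (((1 : ℂ) - (r : ℂ)) * (N : ℂ)) with hDdef
  have hw : sing p k a - (v - T v)
      = ∑ j ∈ Finset.range N, sing p (k + j + 1) (D * q ^ j) := by
    have hTv : T v = ∑ j ∈ Finset.range (N + 1),
        (sing p (k + j) ((r : ℂ) * c j) + sing p (k + j + 1) ((s : ℂ) * c j)) := by
      rw [hvdef, map_sum]
      exact Finset.sum_congr rfl fun j _ => T_sing hT _ _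
    have hvTv : v - T v = (sing p k a
          + ∑ j ∈ Finset.range N, sing p (k + j + 1) (((1 : ℂ) - (r : ℂ)) * c (j + 1)))
        - ∑ j ∈ Finset.range N, sing p (k + j + 1) ((s : ℂ) * c j) := by
      rw [hTv, hvdef, ← Finset.sum_sub_distrib]
      have hterm : ∀ j, sing p (k + j) (c j)
          - (sing p (k + j) ((r : ℂ) * c j) + sing p (k + j + 1) ((s : ℂ) * c j))
          = sing p (k + j) (((1 : ℂ) - (r : ℂ)) * c j)
            - sing p (k + j + 1) ((s : ℂ) * c j) := by
        intro j
        rw [show ((1 : ℂ) - (r : ℂ)) * c j = c j - (r : ℂ) * c j by ring, sing_sub]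
        abel
      rw [Finset.sum_congr rfl fun j _ => hterm j, Finset.sum_sub_distrib,
        Finset.sum_range_succ' (fun j => sing p (k + j) (((1 : ℂ) - (r : ℂ)) * c j)) N,
        Finset.sum_range_succ (fun j => sing p (k + j + 1) ((s : ℂ) * c j)) N]
      have hc0 : ((1 : ℂ) - (r : ℂ)) * c 0 = a := by
        have hcc : c 0 = a / ((1 : ℂ) - (r : ℂ)) := by
          simp only [hcdef]
          norm_num
        rw [hcc, mul_div_cancel₀ _ h1rC]
      have hcN : (s : ℂ) * c N = 0 := by
        have hcc : c N = 0 := by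
          simp only [hcdef]
          rw [div_self hNC]
          ring
        rw [hcc, mul_zero]
      rw [hcN, sing_zero, hc0]
      simp only [Nat.add_zero, add_zero]
      have hassoc : (∑ j ∈ Finset.range N, sing p (k + (j + 1)) (((1 : ℂ) - (r : ℂ)) * c (j + 1)))
          = ∑ j ∈ Finset.range N, sing p (k + j + 1) (((1 : ℂ) - (r : ℂ)) * c (j + 1)) := rfl
      rw [hassoc]
      abel
    rw [hvTv]
    have h5 : sing p k a - (sing p k a
          + ∑ j ∈ Finset.range N, sing p (k + j + 1) (((1 : ℂ) - (r : ℂ)) * c (j + 1))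
        - ∑ j ∈ Finset.range N, sing p (k + j + 1) ((s : ℂ) * c j))
        = ∑ j ∈ Finset.range N, (sing p (k + j + 1) ((s : ℂ) * c j)
            - sing p (k + j + 1) (((1 : ℂ) - (r : ℂ)) * c (j + 1))) := by
      rw [Finset.sum_sub_distrib]; abel
    rw [h5]
    refine Finset.sum_congr rfl fun j hj => ?_
    rw [← sing_sub]
    refine sing_eq_sing _ ?_
    have hs' : (s : ℂ) = q * ((1 : ℂ) - (r : ℂ)) := by
      rw [hqdef, div_mul_cancel₀ _ h1rC]
    simp only [hcdef, hDdef]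
    rw [hs']
    push_cast
    rw [pow_succ]
    field_simp
    ring
  have hwnorm : ‖sing p k a - (v - T v)‖ ^ p.toReal
      ≤ K ^ p.toReal * (N : ℝ) ^ (1 - p.toReal) := by
    rw [hw]
    have hinj : ∀ x ∈ Finset.range N, ∀ y ∈ Finset.range N,
        k + x + 1 = k + y + 1 → x = y := by intros; omega
    set f : ℕ → ℂ := fun m => D * q ^ (m - (k + 1)) with hfdef
    have hfval : ∀ j : ℕ, f (k + j + 1) = D * q ^ j := by
      intro j
      simp only [hfdef]
      have h6 : k + j + 1 - (k + 1) = j := by omega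
      rw [h6]
    have hrw : ∑ j ∈ Finset.range N, sing p (k + j + 1) (D * q ^ j)
        = ∑ m ∈ (Finset.range N).image (fun j => k + j + 1), sing p m (f m) := by
      rw [Finset.sum_image hinj]
      exact Finset.sum_congr rfl fun j _ => sing_eq_sing _ (hfval j).symm
    have hnss := lp.norm_sum_single (p := p) hq0 f ((Finset.range N).image (fun j => k + j + 1))
    rw [hrw]
    rw [show (∑ m ∈ (Finset.range N).image (fun j => k + j + 1), sing p m (f m))
      = ∑ m ∈ (Finset.range N).image (fun j => k + j + 1), lp.single p m (f m) from rfl]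
    rw [hnss, Finset.sum_image hinj]
    have hbound : ∀ j ∈ Finset.range N, ‖f (k + j + 1)‖ ^ p.toReal ≤ (K / N) ^ p.toReal := by
      intro j _
      apply Real.rpow_le_rpow (norm_nonneg _) _ (le_of_lt hq0)
      rw [hfval j, norm_mul]
      have hDn : ‖D‖ = K / N := by
        rw [hDdef, hKdef, norm_div, norm_mul, norm_mul, hnorm1r, Complex.norm_real,
          Complex.norm_natCast, Real.norm_eq_abs, div_div]
      rw [hDn]
      calc K / N * ‖q ^ j‖ ≤ K / N * 1 := by
            apply mul_le_mul_of_nonneg_left _ (by positivity)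
            rw [norm_pow]
            exact pow_le_one₀ (norm_nonneg _) hq1
        _ = K / N := mul_one _
    calc ∑ j ∈ Finset.range N, ‖f (k + j + 1)‖ ^ p.toReal
        ≤ ∑ _j ∈ Finset.range N, (K / N) ^ p.toReal := Finset.sum_le_sum hbound
      _ = N * (K / N) ^ p.toReal := by rw [Finset.sum_const, Finset.card_range]; ring
      _ = K ^ p.toReal * (N : ℝ) ^ (1 - p.toReal) := by
          rw [Real.div_rpow hK0 (le_of_lt hN0), Real.rpow_sub hN0, Real.rpow_one]
          field_simp
  refine ⟨v, ?_⟩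
  by_contra hcon
  push_neg at hcon
  have : ε ^ p.toReal ≤ ‖sing p k a - (v - T v)‖ ^ p.toReal :=
    Real.rpow_le_rpow (le_of_lt hε) hcon (le_of_lt hq0)
  linarith [lt_of_le_of_lt hwnorm hNlt]

/-- Cesàro means. -/
noncomputable def M (T : lp (fun _ : ℕ => ℂ) p →L[ℂ] lp (fun _ : ℕ => ℂ) p) (n : ℕ)
    (x : lp (fun _ : ℕ => ℂ) p) : lp (fun _ : ℕ => ℂ) p :=
  ((n : ℂ))⁻¹ • ∑ m ∈ Finset.range n, (T ^ (m + 1)) x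

lemma M_sub (n : ℕ) (x y : lp (fun _ : ℕ => ℂ) p) :
    M T n (x - y) = M T n x - M T n y := by
  simp only [M, map_sub, Finset.sum_sub_distrib, smul_sub]

lemma M_add (n : ℕ) (x y : lp (fun _ : ℕ => ℂ) p) :
    M T n (x + y) = M T n x + M T n y := by
  simp only [M, map_add, Finset.sum_add_distrib, smul_add]

lemma norm_M_le (hTn : ‖T‖ ≤ 1) (n : ℕ) (x : lp (fun _ : ℕ => ℂ) p) :
    ‖M T n x‖ ≤ ‖x‖ := by
  rcases Nat.eq_zero_or_pos n with h | h
  · subst h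
    simp only [M, Nat.cast_zero, inv_zero, zero_smul, norm_zero]
    exact norm_nonneg x
  have hn0 : (0 : ℝ) < n := by exact_mod_cast h
  have hbound : ∀ m : ℕ, ‖(T ^ (m + 1)) x‖ ≤ ‖x‖ := by
    intro m
    calc ‖(T ^ (m + 1)) x‖ ≤ ‖T ^ (m + 1)‖ * ‖x‖ := (T ^ (m + 1)).le_opNorm x
      _ ≤ 1 * ‖x‖ := by
          apply mul_le_mul_of_nonneg_right _ (norm_nonneg x)
          calc ‖T ^ (m + 1)‖ ≤ ‖T‖ ^ (m + 1) := norm_pow_le' T (Nat.succ_pos m)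
            _ ≤ 1 := pow_le_one₀ (norm_nonneg T) hTn
      _ = ‖x‖ := one_mul _
  calc ‖M T n x‖ = ((n : ℝ))⁻¹ * ‖∑ m ∈ Finset.range n, (T ^ (m + 1)) x‖ := by
        rw [M, norm_smul, norm_inv, Complex.norm_natCast]
    _ ≤ ((n : ℝ))⁻¹ * (n * ‖x‖) := by
        apply mul_le_mul_of_nonneg_left _ (by positivity)
        calc ‖∑ m ∈ Finset.range n, (T ^ (m + 1)) x‖
            ≤ ∑ m ∈ Finset.range n, ‖(T ^ (m + 1)) x‖ := norm_sum_le _ _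
          _ ≤ ∑ _m ∈ Finset.range n, ‖x‖ := Finset.sum_le_sum fun m _ => hbound m
          _ = n * ‖x‖ := by rw [Finset.sum_const, Finset.card_range]; ring
    _ = ‖x‖ := by field_simp

lemma tendsto_M_range (hTn : ‖T‖ ≤ 1) (z : lp (fun _ : ℕ => ℂ) p) :
    Tendsto (fun n : ℕ => M T n (z - T z)) atTop (nhds 0) := by
  have hpow : ∀ m : ℕ, ‖(T ^ m) z‖ ≤ ‖z‖ := by
    intro m
    rcases Nat.eq_zero_or_pos m with h | h
    · subst h; simp
    calc ‖(T ^ m) z‖ ≤ ‖T ^ m‖ * ‖z‖ := (T ^ m).le_opNorm z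
      _ ≤ 1 * ‖z‖ := by
          apply mul_le_mul_of_nonneg_right _ (norm_nonneg z)
          calc ‖T ^ m‖ ≤ ‖T‖ ^ m := norm_pow_le' T h
            _ ≤ 1 := pow_le_one₀ (norm_nonneg T) hTn
      _ = ‖z‖ := one_mul _
  have hsum : ∀ n : ℕ, ∑ m ∈ Finset.range n, (T ^ (m + 1)) (z - T z)
      = T z - (T ^ (n + 1)) z := by
    intro n
    have hterm : ∀ m : ℕ, (T ^ (m + 1)) (z - T z) = (T ^ (m + 1)) z - (T ^ (m + 2)) z := by
      intro m
      rw [map_sub]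
      congr 1
    rw [Finset.sum_congr rfl fun m _ => hterm m]
    have := Finset.sum_range_sub' (fun m => (T ^ (m + 1)) z) n
    rw [this]
    norm_num
  rw [tendsto_zero_iff_norm_tendsto_zero]
  apply squeeze_zero (fun n => norm_nonneg _) (g := fun n : ℕ => 2 * ‖z‖ / n)
  · intro n
    rw [M, norm_smul, norm_inv, Complex.norm_natCast, hsum n]
    rcases Nat.eq_zero_or_pos n with h | h
    · subst h; simp
    have hn0 : (0 : ℝ) < n := by exact_mod_cast h
    rw [div_eq_mul_inv, mul_comm (2 * ‖z‖) _, mul_comm ((n : ℝ))⁻¹ _]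
    rw [mul_comm ‖T z - (T ^ (n + 1)) z‖ _]
    apply mul_le_mul_of_nonneg_left _ (by positivity)
    calc ‖T z - (T ^ (n + 1)) z‖ ≤ ‖T z‖ + ‖(T ^ (n + 1)) z‖ := norm_sub_le _ _
      _ ≤ ‖z‖ + ‖z‖ := by
          gcongr
          · calc ‖T z‖ ≤ ‖T‖ * ‖z‖ := T.le_opNorm z
              _ ≤ 1 * ‖z‖ := mul_le_mul_of_nonneg_right hTn (norm_nonneg z)
              _ = ‖z‖ := one_mul _
          · exact hpow (n + 1)
      _ = 2 * ‖z‖ := by ring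
  · simpa using tendsto_const_div_atTop_nhds_zero_nat (2 * ‖z‖)

lemma tendsto_M_of_approx (hTn : ‖T‖ ≤ 1) (x : lp (fun _ : ℕ => ℂ) p)
    (h : ∀ ε > 0, ∃ y : lp (fun _ : ℕ => ℂ) p,
      Tendsto (fun n => M T n y) atTop (nhds 0) ∧ ‖x - y‖ < ε) :
    Tendsto (fun n => M T n x) atTop (nhds 0) := by
  rw [NormedAddCommGroup.tendsto_nhds_zero]
  intro ε hε
  obtain ⟨y, hy, hxy⟩ := h (ε / 2) (by linarith)
  have hy' := (NormedAddCommGroup.tendsto_nhds_zero.mp hy) (ε / 2) (by linarith)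
  filter_upwards [hy'] with n hn
  have hdec : M T n x = M T n y + M T n (x - y) := by
    rw [M_sub]; abel
  calc ‖M T n x‖ ≤ ‖M T n y‖ + ‖M T n (x - y)‖ := by rw [hdec]; exact norm_add_le _ _
    _ ≤ ‖M T n y‖ + ‖x - y‖ := by gcongr; exact norm_M_le hTn n _
    _ < ε / 2 + ε / 2 := by gcongr
    _ = ε := by ring

lemma tendsto_M_all (hq : 1 < p.toReal) (hpt : p ≠ ⊤) (hT : IsB p r s T)
    (hs0 : s ≠ 0) (hrs : |r| + |s| ≤ 1) (x : lp (fun _ : ℕ => ℂ) p) :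
    Tendsto (fun n => M T n x) atTop (nhds 0) := by
  have hq0 : 0 < p.toReal := by linarith
  have habs : 0 < |s| := abs_pos.2 hs0
  have hr1 : |r| < 1 := by linarith
  have hsr : |s| ≤ 1 - r := by
    have := le_abs_self r; linarith
  have hTn : ‖T‖ ≤ 1 := (norm_T_le hq0 hT).trans hrs
  have hsingle : ∀ (k : ℕ) (a : ℂ), Tendsto (fun n => M T n (sing p k a)) atTop (nhds 0) := by
    intro k a
    apply tendsto_M_of_approx hTn
    intro ε hε
    obtain ⟨v, hv⟩ := exists_approx hq hT hr1 hsr k a ε hε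
    exact ⟨v - T v, tendsto_M_range hTn v, hv⟩
  have hpartial : ∀ (m : ℕ),
      Tendsto (fun n => M T n (∑ i ∈ Finset.range m, sing p i ((x : ∀ _ : ℕ, ℂ) i)))
        atTop (nhds 0) := by
    intro m
    induction m with
    | zero =>
      simp only [Finset.range_zero, Finset.sum_empty]
      have : ∀ n, M T n (0 : lp (fun _ : ℕ => ℂ) p) = 0 := by
        intro n; simp [M]
      simp only [this]
      exact tendsto_const_nhds
    | succ m ih =>
      rw [Finset.sum_range_succ]
      have h2 : ∀ n, M T n ((∑ i ∈ Finset.range m, sing p i ((x : ∀ _ : ℕ, ℂ) i))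
          + sing p m ((x : ∀ _ : ℕ, ℂ) m))
          = M T n (∑ i ∈ Finset.range m, sing p i ((x : ∀ _ : ℕ, ℂ) i))
            + M T n (sing p m ((x : ∀ _ : ℕ, ℂ) m)) := fun n => M_add n _ _
    -- combine
      simp only [h2]
      simpa using ih.add (hsingle m ((x : ∀ _ : ℕ, ℂ) m))
  apply tendsto_M_of_approx hTn
  intro ε hε
  have hHS := (lp.hasSum_single hpt x).tendsto_sum_nat
  have := (Metric.tendsto_atTop.mp hHS) ε hε
  obtain ⟨m, hm⟩ := this
  refine ⟨∑ i ∈ Finset.range m, sing p i ((x : ∀ _ : ℕ, ℂ) i), hpartial m, ?_⟩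
  have := hm m le_rfl
  rw [dist_eq_norm] at this
  calc ‖x - ∑ i ∈ Finset.range m, sing p i ((x : ∀ _ : ℕ, ℂ) i)‖
      = ‖(∑ i ∈ Finset.range m, sing p i ((x : ∀ _ : ℕ, ℂ) i)) - x‖ := norm_sub_rev _ _
    _ < ε := this

lemma tendsto_of_powerBounded (C : ℝ) (hC : ∀ n : ℕ, ‖T ^ n‖ ≤ C)
    (x : lp (fun _ : ℕ => ℂ) p) :
    Tendsto (fun n : ℕ => ((n : ℂ))⁻¹ • (T ^ n) x) atTop (nhds 0) := by
  rw [tendsto_zero_iff_norm_tendsto_zero]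
  apply squeeze_zero (fun n => norm_nonneg _) (g := fun n : ℕ => C * ‖x‖ / n)
  · intro n
    rw [norm_smul, norm_inv, Complex.norm_natCast, div_eq_mul_inv,
      mul_comm ((n : ℝ))⁻¹ _, mul_comm (C * ‖x‖) _, mul_comm ‖(T ^ n) x‖ _]
    apply mul_le_mul_of_nonneg_left _ (by positivity)
    calc ‖(T ^ n) x‖ ≤ ‖T ^ n‖ * ‖x‖ := (T ^ n).le_opNorm x
      _ ≤ C * ‖x‖ := mul_le_mul_of_nonneg_right (hC n) (norm_nonneg x)
  · simpa using tendsto_const_div_atTop_nhds_zero_nat (C * ‖x‖)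

lemma tendsto_of_meanErgodic (P : lp (fun _ : ℕ => ℂ) p →L[ℂ] lp (fun _ : ℕ => ℂ) p)
    (h2 : ∀ x, Tendsto (fun n : ℕ => ((n : ℂ))⁻¹ • ∑ m ∈ Finset.range n, (T ^ (m + 1)) x)
      atTop (nhds (P x))) (x : lp (fun _ : ℕ => ℂ) p) :
    Tendsto (fun n : ℕ => ((n : ℂ))⁻¹ • (T ^ n) x) atTop (nhds 0) := by
  set S : ℕ → lp (fun _ : ℕ => ℂ) p := fun n => ∑ m ∈ Finset.range n, (T ^ (m + 1)) x with hS
  have hg : Tendsto (fun n : ℕ => ((n : ℂ))⁻¹ • S n) atTop (nhds (P x)) := h2 x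
  have hshift : Tendsto (fun n : ℕ => (((n : ℂ) + 1))⁻¹ • S (n + 1)) atTop (nhds (P x)) := by
    have h3 := (tendsto_add_atTop_iff_nat 1).2 hg
    apply h3.congr
    intro n
    push_cast
    rfl
  have hcscalar : Tendsto (fun n : ℕ => (n : ℂ) * ((n : ℂ) + 1)⁻¹) atTop (nhds 1) := by
    have h0 : Tendsto (fun n : ℕ => ((n : ℂ) + 1)⁻¹) atTop (nhds 0) := by
      rw [tendsto_zero_iff_norm_tendsto_zero]
      have hnn : ∀ n : ℕ, ‖((n : ℂ) + 1)⁻¹‖ = 1 / ((n : ℝ) + 1) := by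
        intro n
        rw [norm_inv]
        have h5 : ((n : ℂ) + 1) = ((n + 1 : ℕ) : ℂ) := by push_cast; ring
        rw [h5, Complex.norm_natCast, one_div]
        congr 1
        push_cast
        ring
      simp only [hnn]
      exact tendsto_one_div_add_atTop_nhds_zero_nat
    have h1 : ∀ n : ℕ, (n : ℂ) * ((n : ℂ) + 1)⁻¹ = 1 - ((n : ℂ) + 1)⁻¹ := by
      intro n
      have hne : ((n : ℂ) + 1) ≠ 0 := by
        have h5 : ((n : ℂ) + 1) = ((n + 1 : ℕ) : ℂ) := by push_cast; ring
        rw [h5]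
        exact Nat.cast_ne_zero.2 (Nat.succ_ne_zero n)
      field_simp
      ring
    simp only [h1]
    simpa using tendsto_const_nhds.sub h0
  have hprev : Tendsto (fun n : ℕ => (((n : ℂ) + 1))⁻¹ • S n) atTop (nhds (P x)) := by
    have h3 : Tendsto (fun n : ℕ => ((n : ℂ) * ((n : ℂ) + 1)⁻¹) • (((n : ℂ))⁻¹ • S n))
        atTop (nhds ((1 : ℂ) • P x)) := hcscalar.smul hg
    rw [one_smul] at h3
    apply h3.congr'
    filter_upwards [eventually_ge_atTop 1] with n hn
    have hne : (n : ℂ) ≠ 0 := Nat.cast_ne_zero.2 (by omega)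
    have hne2 : ((n : ℂ) + 1) ≠ 0 := by
      have h5 : ((n : ℂ) + 1) = ((n + 1 : ℕ) : ℂ) := by push_cast; ring
      rw [h5]
      exact Nat.cast_ne_zero.2 (Nat.succ_ne_zero n)
    rw [smul_smul]
    congr 1
    field_simp
  have hdiff : Tendsto (fun n : ℕ => (((n : ℂ) + 1))⁻¹ • (T ^ (n + 1)) x) atTop (nhds 0) := by
    have h4 : ∀ n : ℕ, (T ^ (n + 1)) x = S (n + 1) - S n := by
      intro n; rw [hS]; simp [Finset.sum_range_succ]
    have h5 := hshift.sub hprev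
    rw [sub_self] at h5
    apply h5.congr
    intro n
    rw [h4 n, smul_sub]
  rw [← tendsto_add_atTop_iff_nat 1]
  apply hdiff.congr
  intro n
  push_cast
  rfl

end Stmt10Aux


/-- For `1 < p < ∞` and nonzero reals `r, s`, the following are
equivalent for the operator `B(r,s)` on `l_p` (acting by `(B(r,s)x)_n = s x_{n-1} + r x_n`,
`x_{-1} := 0`): (1) `B(r,s)^n / n → 0` in the strong operator topology; (2) `B(r,s)` is
mean ergodic; (3) `B(r,s)` is power bounded; (4) `|r| + |s| ≤ 1`. -/
theorem stmt10 (p : ℝ≥0∞) [Fact (1 ≤ p)] (hp1 : 1 < p) (hpt : p ≠ ⊤)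
    (r s : ℝ) (hr : r ≠ 0) (hs : s ≠ 0)
    (T : lp (fun _ : ℕ => ℂ) p →L[ℂ] lp (fun _ : ℕ => ℂ) p)
    (hT : ∀ x : lp (fun _ : ℕ => ℂ) p,
      (T x : ∀ _ : ℕ, ℂ) 0 = (r : ℂ) * (x : ∀ _ : ℕ, ℂ) 0 ∧
      ∀ n : ℕ, (T x : ∀ _ : ℕ, ℂ) (n + 1)
        = (s : ℂ) * (x : ∀ _ : ℕ, ℂ) n + (r : ℂ) * (x : ∀ _ : ℕ, ℂ) (n + 1)) :
    List.TFAE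
      [∀ x, Tendsto (fun n : ℕ => ((n : ℂ))⁻¹ • (T ^ n) x) atTop (nhds 0),
       ∃ P : lp (fun _ : ℕ => ℂ) p →L[ℂ] lp (fun _ : ℕ => ℂ) p,
         ∀ x, Tendsto (fun n : ℕ =>
           ((n : ℂ))⁻¹ • ∑ m ∈ Finset.range n, (T ^ (m + 1)) x) atTop (nhds (P x)),
       ∃ C : ℝ, ∀ n : ℕ, ‖T ^ n‖ ≤ C,
       |r| + |s| ≤ 1] := by
  have hq1 : 1 < p.toReal := by
    have h := ENNReal.toReal_strict_mono hpt hp1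
    simpa using h
  have hq0 : 0 < p.toReal := by linarith
  have hTB : Stmt10Aux.IsB p r s T := hT
  tfae_have 1 → 4
  | h1 => by
    by_contra h4
    push_neg at h4
    exact Stmt10Aux.not_tendsto_of_one_lt hq0 hTB h4 h1
  tfae_have 4 → 3
  | h4 => by
    refine ⟨1, fun n => ?_⟩
    have hTn : ‖T‖ ≤ 1 := (Stmt10Aux.norm_T_le hq0 hTB).trans h4
    rcases Nat.eq_zero_or_pos n with h | h
    · subst h
      rw [pow_zero, ContinuousLinearMap.one_def]
      exact ContinuousLinearMap.norm_id_le
    · exact (norm_pow_le' T h).trans (pow_le_one₀ (norm_nonneg T) hTn)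
  tfae_have 3 → 1
  | ⟨C, hC⟩ => fun x => Stmt10Aux.tendsto_of_powerBounded C hC x
  tfae_have 2 → 1
  | ⟨P, hP⟩ => fun x => Stmt10Aux.tendsto_of_meanErgodic P hP x
  tfae_have 4 → 2
  | h4 => by
    refine ⟨0, fun x => ?_⟩
    have h5 := Stmt10Aux.tendsto_M_all hq1 hpt hTB hs h4 x
    rw [ContinuousLinearMap.zero_apply]
    exact h5
  tfae_finish
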